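/- Let M be a commutative monoid satisfying the Riesz decomposition property. Then: (1) for any two ideals I, J of M the set I + J = {x + y : x ∈ I, y ∈ J} is again an ideal and is the supremum of I and J in Id M; (2) the lattice Id M is distributive, i.e. (I + J) ∩ K = (I ∩ K) + (J ∩ K) for all ideals I, J, K; and (3) the assignment sending the ≍-class [x] of x ∈ M to the principal ideal {z ∈ M : z ∝ x} is a well-defined isomorphism of join-semilattices from the maximal semilattice quotient ∇(M) onto the semilattice of compact elements of Id M. -/

import Mathlib

/-- An ideal of a commutative monoid `M`: a nonempty subset `I` such that
`x + y ∈ I ↔ x ∈ I ∧ y ∈ I`. -/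
def IsMonIdeal {M : Type*} [AddCommMonoid M] (I : Set M) : Prop :=
  I.Nonempty ∧ ∀ x y : M, x + y ∈ I ↔ x ∈ I ∧ y ∈ I

theorem IsMonIdeal.zero_mem {M : Type*} [AddCommMonoid M] {I : Set M}
    (h : IsMonIdeal I) : (0 : M) ∈ I := by
  obtain ⟨x, hx⟩ := h.1
  exact ((h.2 x 0).mp (by simpa using hx)).2

/-- `Id M`, the collection of all ideals of `M`, ordered by inclusion. -/
abbrev MonIdeal (M : Type*) [AddCommMonoid M] := {I : Set M // IsMonIdeal I}

instance (M : Type*) [AddCommMonoid M] : InfSet (MonIdeal M) :=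
  ⟨fun s => ⟨{x | ∀ I ∈ s, x ∈ (I : MonIdeal M).1},
    ⟨⟨0, fun I _ => I.2.zero_mem⟩, fun x y => by
      constructor
      · intro h
        exact ⟨fun I hI => ((I.2.2 x y).mp (h I hI)).1,
               fun I hI => ((I.2.2 x y).mp (h I hI)).2⟩
      · rintro ⟨hx, hy⟩ I hI
        exact (I.2.2 x y).mpr ⟨hx I hI, hy I hI⟩⟩⟩⟩

/-- `Id M` is a complete lattice, with infima given by intersections. -/
instance (M : Type*) [AddCommMonoid M] : CompleteLattice (MonIdeal M) :=
  completeLatticeOfInf _ (fun s =>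
    ⟨fun I hI x hx => hx I hI, fun J hJ x hx I hI => hJ hI hx⟩)

/-- `x ∝ y` : `x ≤ n • y` in the algebraic preorder of `M`, for some `n ≥ 1`. -/
def Propto {M : Type*} [AddCommMonoid M] (x y : M) : Prop :=
  ∃ n : ℕ, 1 ≤ n ∧ ∃ z : M, x + z = n • y

/-- `x ≍ y` : `x ∝ y` and `y ∝ x`. -/
def Asymp {M : Type*} [AddCommMonoid M] (x y : M) : Prop :=
  Propto x y ∧ Propto y x

section Aux
variable {M : Type*} [AddCommMonoid M]

theorem IsMonIdeal.add_mem {I : Set M} (h : IsMonIdeal I) {x y : M}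
    (hx : x ∈ I) (hy : y ∈ I) : x + y ∈ I := (h.2 x y).mpr ⟨hx, hy⟩

theorem IsMonIdeal.left_mem {I : Set M} (h : IsMonIdeal I) {x y : M}
    (hxy : x + y ∈ I) : x ∈ I := ((h.2 x y).mp hxy).1

theorem IsMonIdeal.nsmul_mem {I : Set M} (h : IsMonIdeal I) {x : M} (hx : x ∈ I) :
    ∀ n : ℕ, n • x ∈ I
  | 0 => by simpa using h.zero_mem
  | n + 1 => by rw [succ_nsmul]; exact h.add_mem (h.nsmul_mem hx n) hx

theorem IsMonIdeal.listSum_mem {I : Set M} (h : IsMonIdeal I) :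
    ∀ l : List M, (∀ a ∈ l, a ∈ I) → l.sum ∈ I
  | [] => fun _ => by simpa using h.zero_mem
  | a :: l => fun hl => by
      rw [List.sum_cons]
      exact h.add_mem (hl a (by simp)) (h.listSum_mem l fun b hb => hl b (by simp [hb]))

theorem propto_refl (x : M) : Propto x x := ⟨1, le_rfl, 0, by simp⟩

theorem propto_zero (x : M) : Propto 0 x := ⟨1, le_rfl, x, by simp⟩

theorem Propto.trans {x y z : M} : Propto x y → Propto y z → Propto x z := by
  rintro ⟨n, hn, u, hu⟩ ⟨m, hm, v, hv⟩
  refine ⟨n * m, Nat.one_le_iff_ne_zero.mpr (by positivity), u + n • v, ?_⟩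
  rw [← add_assoc, hu, ← smul_add, hv, mul_smul]

theorem propto_add_left (x y : M) : Propto x (x + y) :=
  ⟨1, le_rfl, y, by simp⟩

theorem propto_add_right (x y : M) : Propto y (x + y) :=
  ⟨1, le_rfl, x, by simp [add_comm]⟩

theorem IsMonIdeal.propto_mem {I : Set M} (h : IsMonIdeal I) {x z : M}
    (hx : x ∈ I) (hz : Propto z x) : z ∈ I := by
  obtain ⟨n, hn, u, hu⟩ := hz
  exact h.left_mem (hu ▸ h.nsmul_mem hx n)

theorem isMonIdeal_propto (x : M) : IsMonIdeal {z : M | Propto z x} := by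
  refine ⟨⟨0, propto_zero x⟩, fun a b => ⟨?_, ?_⟩⟩
  · rintro ⟨n, hn, w, hw⟩
    exact ⟨⟨n, hn, b + w, by rw [← add_assoc]; exact hw⟩,
      ⟨n, hn, a + w, by rw [← add_assoc, add_comm b a]; exact hw⟩⟩
  · rintro ⟨⟨n, hn, u, hu⟩, ⟨m, hm, v, hv⟩⟩
    refine ⟨n + m, by omega, u + v, ?_⟩
    rw [add_nsmul, ← hu, ← hv]; abel

theorem monIdeal_le_iff {I J : MonIdeal M} (h : I ≤ J) : I.1 ⊆ J.1 := h

/-- principal ideal as a MonIdeal -/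
def princ (x : M) : MonIdeal M := ⟨{z : M | Propto z x}, isMonIdeal_propto x⟩

theorem princ_le {I : MonIdeal M} {x : M} (hx : x ∈ I.1) : princ x ≤ I :=
  fun _z hz => I.2.propto_mem hx hz

theorem mem_princ_self (x : M) : x ∈ (princ x).1 := propto_refl x

theorem isMonIdeal_inter (I J : MonIdeal M) : IsMonIdeal (I.1 ∩ J.1) := by
  refine ⟨⟨0, I.2.zero_mem, J.2.zero_mem⟩, fun x y => ?_⟩
  rw [Set.mem_inter_iff, Set.mem_inter_iff, Set.mem_inter_iff, I.2.2, J.2.2]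
  tauto

theorem inf_coe (I J : MonIdeal M) : (I ⊓ J).1 = I.1 ∩ J.1 := by
  apply Set.Subset.antisymm
  · exact Set.subset_inter (monIdeal_le_iff inf_le_left) (monIdeal_le_iff inf_le_right)
  · exact monIdeal_le_iff (le_inf (c := (⟨I.1 ∩ J.1, isMonIdeal_inter I J⟩ : MonIdeal M)) (a := I) (b := J)
      (fun _z hz => hz.1) (fun _z hz => hz.2))

theorem sum_isMonIdeal (hriesz : ∀ a b₀ b₁ : M, (∃ z, a + z = b₀ + b₁) →
      ∃ a₀ a₁ : M, (∃ z, a₀ + z = b₀) ∧ (∃ z, a₁ + z = b₁) ∧ a = a₀ + a₁) (I J : MonIdeal M) :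
    IsMonIdeal {z : M | ∃ x ∈ I.1, ∃ y ∈ J.1, z = x + y} := by
  refine ⟨⟨0, 0, I.2.zero_mem, 0, J.2.zero_mem, by simp⟩, fun a b => ⟨?_, ?_⟩⟩
  · rintro ⟨x, hx, y, hy, hab⟩
    constructor
    · obtain ⟨a₀, a₁, ⟨z₀, hz₀⟩, ⟨z₁, hz₁⟩, ha⟩ := hriesz a x y ⟨b, hab.symm ▸ rfl⟩
      exact ⟨a₀, I.2.left_mem (hz₀ ▸ hx), a₁, J.2.left_mem (hz₁ ▸ hy), ha⟩
    · obtain ⟨b₀, b₁, ⟨z₀, hz₀⟩, ⟨z₁, hz₁⟩, hb⟩ := hriesz b x y ⟨a, by rw [add_comm]; exact hab.symm ▸ rfl⟩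
      exact ⟨b₀, I.2.left_mem (hz₀ ▸ hx), b₁, J.2.left_mem (hz₁ ▸ hy), hb⟩
  · rintro ⟨⟨x₁, hx₁, y₁, hy₁, rfl⟩, ⟨x₂, hx₂, y₂, hy₂, rfl⟩⟩
    exact ⟨x₁ + x₂, I.2.add_mem hx₁ hx₂, y₁ + y₂, J.2.add_mem hy₁ hy₂, by abel⟩

theorem sup_coe (hriesz : ∀ a b₀ b₁ : M, (∃ z, a + z = b₀ + b₁) →
      ∃ a₀ a₁ : M, (∃ z, a₀ + z = b₀) ∧ (∃ z, a₁ + z = b₁) ∧ a = a₀ + a₁) (I J : MonIdeal M) :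
    (I ⊔ J).1 = {z : M | ∃ x ∈ I.1, ∃ y ∈ J.1, z = x + y} := by
  apply Set.Subset.antisymm
  · refine monIdeal_le_iff (sup_le (c := (⟨_, sum_isMonIdeal hriesz I J⟩ : MonIdeal M))
      (fun z hz => ⟨z, hz, 0, J.2.zero_mem, by simp⟩)
      (fun z hz => ⟨0, I.2.zero_mem, z, hz, by simp⟩))
  · rintro z ⟨x, hx, y, hy, rfl⟩
    exact (I ⊔ J).2.add_mem (monIdeal_le_iff le_sup_left hx) (monIdeal_le_iff le_sup_right hy)

theorem sSup_coe (S : Set (MonIdeal M)) :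
    (sSup S).1 = {z : M | ∃ l : List M, (∀ a ∈ l, ∃ I ∈ S, a ∈ I.1) ∧ ∃ w, z + w = l.sum} := by
  have hU : IsMonIdeal {z : M | ∃ l : List M,
      (∀ a ∈ l, ∃ I ∈ S, a ∈ I.1) ∧ ∃ w, z + w = l.sum} := by
    refine ⟨⟨0, [], by simp, 0, by simp⟩, fun a b => ⟨?_, ?_⟩⟩
    · rintro ⟨l, hl, w, hw⟩
      exact ⟨⟨l, hl, b + w, by rw [← add_assoc]; exact hw⟩,
        ⟨l, hl, a + w, by rw [← add_assoc, add_comm b a]; exact hw⟩⟩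
    · rintro ⟨⟨l₁, hl₁, w₁, hw₁⟩, ⟨l₂, hl₂, w₂, hw₂⟩⟩
      refine ⟨l₁ ++ l₂, ?_, w₁ + w₂, ?_⟩
      · intro c hc
        rcases List.mem_append.mp hc with h | h
        · exact hl₁ c h
        · exact hl₂ c h
      · rw [List.sum_append, ← hw₁, ← hw₂]; abel
  apply Set.Subset.antisymm
  · refine monIdeal_le_iff (sSup_le (a := (⟨_, hU⟩ : MonIdeal M)) fun I hI z hz =>
      ⟨[z], fun a ha => ⟨I, hI, by rw [List.mem_singleton] at ha; exact ha ▸ hz⟩, 0, by simp⟩)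
  · rintro z ⟨l, hl, w, hw⟩
    have hsum : l.sum ∈ (sSup S).1 := by
      refine (sSup S).2.listSum_mem l fun a ha => ?_
      obtain ⟨I, hI, haI⟩ := hl a ha
      exact monIdeal_le_iff (le_sSup hI) haI
    exact (sSup S).2.left_mem (hw ▸ hsum)

theorem exists_mem_all {S : Set (MonIdeal M)} (hne : S.Nonempty)
    (hdir : DirectedOn (· ≤ ·) S) :
    ∀ l : List M, (∀ a ∈ l, ∃ I ∈ S, a ∈ I.1) → ∃ J ∈ S, ∀ a ∈ l, a ∈ J.1
  | [] => fun _ => ⟨hne.choose, hne.choose_spec, by simp⟩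
  | a :: l => fun hl => by
      obtain ⟨J, hJ, hJl⟩ := exists_mem_all hne hdir l fun b hb => hl b (by simp [hb])
      obtain ⟨I, hI, haI⟩ := hl a (by simp)
      obtain ⟨K, hK, hIK, hJK⟩ := hdir I hI J hJ
      refine ⟨K, hK, fun b hb => ?_⟩
      rcases List.mem_cons.mp hb with rfl | hb
      · exact monIdeal_le_iff hIK haI
      · exact monIdeal_le_iff hJK (hJl b hb)

end Aux

/-- If `M` satisfies Riesz decomposition, then: (1) the sum of two ideals is an ideal
and is their supremum in `Id M`; (2) `Id M` is a distributive lattice; (3) the map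
`[x] ↦ {z : z ∝ x}` is a well-defined join-semilattice isomorphism from the maximal
semilattice quotient `∇(M)` onto the semilattice of compact elements of `Id M`. -/


theorem stmt6 (M : Type*) [AddCommMonoid M]
    (hriesz : ∀ a b₀ b₁ : M, (∃ z, a + z = b₀ + b₁) →
      ∃ a₀ a₁ : M, (∃ z, a₀ + z = b₀) ∧ (∃ z, a₁ + z = b₁) ∧ a = a₀ + a₁) :
    (∀ I J : MonIdeal M,
      IsMonIdeal {z : M | ∃ x ∈ I.1, ∃ y ∈ J.1, z = x + y} ∧
      (I ⊔ J).1 = {z : M | ∃ x ∈ I.1, ∃ y ∈ J.1, z = x + y}) ∧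
    (∀ I J K : MonIdeal M, (I ⊔ J) ⊓ K = (I ⊓ K) ⊔ (J ⊓ K)) ∧
    ∃ hprinc : ∀ x : M, IsMonIdeal {z : M | Propto z x},
      (∀ x y : M,
        (⟨{z : M | Propto z x}, hprinc x⟩ : MonIdeal M) = ⟨{z : M | Propto z y}, hprinc y⟩
          ↔ Asymp x y) ∧
      (∀ x y : M,
        (⟨{z : M | Propto z (x + y)}, hprinc (x + y)⟩ : MonIdeal M) =
          (⟨{z : M | Propto z x}, hprinc x⟩ : MonIdeal M) ⊔
            ⟨{z : M | Propto z y}, hprinc y⟩) ∧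
      (∀ I : MonIdeal M, IsCompactElement I ↔
        ∃ x : M, I = ⟨{z : M | Propto z x}, hprinc x⟩) := by
  refine ⟨fun I J => ⟨sum_isMonIdeal hriesz I J, sup_coe hriesz I J⟩, ?_, isMonIdeal_propto, ?_, ?_, ?_⟩
  · -- distributivity
    intro I J K
    apply le_antisymm
    · intro z hz
      have hz' : z ∈ ((I ⊔ J) ⊓ K).1 := hz
      rw [inf_coe] at hz'
      obtain ⟨hz1, hzK⟩ := hz'
      rw [sup_coe hriesz] at hz1
      obtain ⟨x, hx, y, hy, rfl⟩ := hz1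
      have hxK : x ∈ K.1 := K.2.left_mem hzK
      have hyK : y ∈ K.1 := K.2.left_mem (by rw [add_comm] at hzK; exact hzK)
      show x + y ∈ ((I ⊓ K) ⊔ (J ⊓ K)).1
      rw [sup_coe hriesz]
      exact ⟨x, by rw [inf_coe]; exact ⟨hx, hxK⟩, y, by rw [inf_coe]; exact ⟨hy, hyK⟩, rfl⟩
    · exact sup_le (inf_le_inf_right K le_sup_left) (inf_le_inf_right K le_sup_right)
  · -- well-defined
    intro x y
    constructor
    · intro h
      have h' : {z : M | Propto z x} = {z : M | Propto z y} := congrArg Subtype.val h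
      exact ⟨(Set.ext_iff.mp h' x).mp (propto_refl x), (Set.ext_iff.mp h' y).mpr (propto_refl y)⟩
    · rintro ⟨hxy, hyx⟩
      apply Subtype.ext
      apply Set.Subset.antisymm
      · exact fun z hz => Propto.trans hz hxy
      · exact fun z hz => Propto.trans hz hyx
  · -- join
    intro x y
    apply Subtype.ext
    rw [sup_coe hriesz]
    apply Set.Subset.antisymm
    · rintro z ⟨n, hn, w, hw⟩
      rw [smul_add] at hw
      obtain ⟨z₀, z₁, ⟨u, hu⟩, ⟨v, hv⟩, hz⟩ := hriesz z (n • x) (n • y) ⟨w, hw⟩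
      exact ⟨z₀, ⟨n, hn, u, hu⟩, z₁, ⟨n, hn, v, hv⟩, hz⟩
    · rintro z ⟨a, ha, b, hb, rfl⟩
      exact (isMonIdeal_propto (x + y)).add_mem
        (Propto.trans ha (propto_add_left x y)) (Propto.trans hb (propto_add_right x y))
  · -- compactness
    intro I
    constructor
    · intro hc
      rw [CompleteLattice.isCompactElement_iff_le_of_directed_sSup_le] at hc
      have hSne : (princ '' I.1 : Set (MonIdeal M)).Nonempty :=
        ⟨princ 0, Set.mem_image_of_mem _ I.2.zero_mem⟩
      have hSdir : DirectedOn (· ≤ ·) (princ '' I.1) := by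
        rintro _ ⟨a, ha, rfl⟩ _ ⟨b, hb, rfl⟩
        refine ⟨princ (a + b), ⟨a + b, I.2.add_mem ha hb, rfl⟩,
          fun z hz => Propto.trans hz (propto_add_left a b),
          fun z hz => Propto.trans hz (propto_add_right a b)⟩
      have hle : I ≤ sSup (princ '' I.1) := fun z hz =>
        monIdeal_le_iff (le_sSup (Set.mem_image_of_mem princ hz)) (mem_princ_self z)
      obtain ⟨P, ⟨x, hx, rfl⟩, hIP⟩ := hc _ hSne hSdir hle
      exact ⟨x, le_antisymm hIP (princ_le hx)⟩
    · rintro ⟨x, rfl⟩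
      rw [CompleteLattice.isCompactElement_iff_le_of_directed_sSup_le]
      intro s hne hdir hle
      have hx : x ∈ (sSup s).1 := monIdeal_le_iff hle (mem_princ_self x)
      rw [sSup_coe] at hx
      obtain ⟨l, hl, w, hw⟩ := hx
      obtain ⟨J, hJ, hJl⟩ := exists_mem_all hne hdir l hl
      have hsum : l.sum ∈ J.1 := J.2.listSum_mem l hJl
      have hxJ : x ∈ J.1 := J.2.left_mem (hw ▸ hsum)
      exact ⟨J, hJ, princ_le hxJ⟩
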